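/- For any function u in H¹(0,a) with u(0) = u(a) = 0 and u not identically zero, the Pólya quotient (∫₀ᵃ u dx)² / ∫₀ᵃ (u')² dx is at most a³/12, with equality attained by u(x) = x(a-x)/2. -/

import Mathlib

open MeasureTheory intervalIntegral

lemma swap_aux (a : ℝ) (ha : 0 < a) (f : ℝ → ℝ)
    (hf : IntervalIntegrable f volume 0 a) :
    ∫ x in (0:ℝ)..a, (∫ t in (0:ℝ)..x, f t) = ∫ t in (0:ℝ)..a, (a - t) * f t := by
  set μ := volume.restrict (Set.Ioc (0:ℝ) a) with hμ
  haveI : IsFiniteMeasure μ := by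
    constructor
    rw [hμ, Measure.restrict_apply_univ]
    exact measure_Ioc_lt_top
  have hfi : IntegrableOn f (Set.Ioc 0 a) volume :=
    (intervalIntegrable_iff_integrableOn_Ioc_of_le ha.le).mp hf
  set F : ℝ → ℝ → ℝ := fun x t =>
    Set.indicator {p : ℝ × ℝ | p.2 ≤ p.1} (fun q => f q.2) (x, t) with hF
  have hmeas : MeasurableSet {p : ℝ × ℝ | p.2 ≤ p.1} :=
    measurableSet_le measurable_snd measurable_fst
  have hbase : Integrable (fun q : ℝ × ℝ => f q.2) (μ.prod μ) := by
    have := (integrable_const (1:ℝ) (μ := μ)).mul_prod hfi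
    simpa using this
  have hint : Integrable (Function.uncurry F) (μ.prod μ) := by
    have : Function.uncurry F =
        Set.indicator {p : ℝ × ℝ | p.2 ≤ p.1} (fun q => f q.2) := by
      funext p; cases p; rfl
    rw [this]
    exact hbase.indicator hmeas
  have key := integral_integral_swap hint
  have hL : ∫ x in (0:ℝ)..a, (∫ t in (0:ℝ)..x, f t) = ∫ x, (∫ t, F x t ∂μ) ∂μ := by
    rw [integral_of_le ha.le]
    apply setIntegral_congr_fun measurableSet_Ioc
    intro x hx
    show (∫ t in (0:ℝ)..x, f t) = ∫ t, F x t ∂μ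
    have : (fun t => F x t) = (Set.Iic x).indicator f := by
      funext t
      simp [hF, Set.indicator_apply]
    rw [this, hμ, MeasureTheory.integral_indicator measurableSet_Iic,
      Measure.restrict_restrict measurableSet_Iic]
    have hset : Set.Iic x ∩ Set.Ioc 0 a = Set.Ioc 0 x := by
      ext y
      simp only [Set.mem_inter_iff, Set.mem_Iic, Set.mem_Ioc]
      constructor
      · rintro ⟨h1, h2, h3⟩; exact ⟨h2, h1⟩
      · rintro ⟨h1, h2⟩; exact ⟨h2, h1, h2.trans hx.2⟩
    rw [hset, integral_of_le hx.1.le]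
  have hR : ∫ t, (∫ x, F x t ∂μ) ∂μ = ∫ t in (0:ℝ)..a, (a - t) * f t := by
    rw [integral_of_le ha.le]
    apply setIntegral_congr_fun measurableSet_Ioc
    intro t ht
    show (∫ x, F x t ∂μ) = (a - t) * f t
    have : (fun x => F x t) = (Set.Ici t).indicator (fun _ => f t) := by
      funext x
      simp [hF, Set.indicator_apply]
    rw [this, hμ, MeasureTheory.integral_indicator measurableSet_Ici,
      Measure.restrict_restrict measurableSet_Ici, setIntegral_const]
    have hset : Set.Ici t ∩ Set.Ioc 0 a = Set.Icc t a := by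
      ext y
      simp only [Set.mem_inter_iff, Set.mem_Ici, Set.mem_Ioc, Set.mem_Icc]
      constructor
      · rintro ⟨h1, h2, h3⟩; exact ⟨h1, h3⟩
      · rintro ⟨h1, h2⟩; exact ⟨h1, lt_of_lt_of_le ht.1 h1, h2⟩
    rw [hset, measureReal_def, Real.volume_Icc, ENNReal.toReal_ofReal (by linarith [ht.2] : (0:ℝ) ≤ a - t)]
    simp [smul_eq_mul]
  rw [hL, key, hR]

lemma wsq_integral (a : ℝ) :
    ∫ x in (0:ℝ)..a, (a / 2 - x) ^ 2 = a ^ 3 / 12 := by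
  rw [intervalIntegral.integral_comp_sub_left (fun x => x ^ 2) (a / 2)]
  rw [integral_pow]
  ring

/-- For any `u ∈ H¹(0,a)` with `u(0) = u(a) = 0` and `u` not identically zero, the Pólya
quotient `(∫₀ᵃ u)² / ∫₀ᵃ (u')²` is at most `a³/12`, with equality attained by
`u(x) = x(a-x)/2` (whose derivative is `a/2 - x`). -/
theorem stmt5 (a : ℝ) (ha : 0 < a) :
    (∀ u u' : ℝ → ℝ,
        IntervalIntegrable u' volume 0 a →
        IntervalIntegrable (fun x => (u' x) ^ 2) volume 0 a →
        (∀ x ∈ Set.Icc (0:ℝ) a, u x = ∫ t in (0:ℝ)..x, u' t) →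
        u a = 0 →
        0 < (∫ x in (0:ℝ)..a, (u' x) ^ 2) →
        (∫ x in (0:ℝ)..a, u x) ^ 2 / (∫ x in (0:ℝ)..a, (u' x) ^ 2) ≤ a ^ 3 / 12) ∧
      (∫ x in (0:ℝ)..a, x * (a - x) / 2) ^ 2 /
          (∫ x in (0:ℝ)..a, (a / 2 - x) ^ 2) = a ^ 3 / 12 := by
  constructor
  · intro u u' hu' hu'2 hrep hua hpos
    set S := ∫ x in (0:ℝ)..a, (u' x) ^ 2 with hS
    set w : ℝ → ℝ := fun x => a / 2 - x with hw
    have hwc : Continuous w := by fun_prop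
    have hwu' : IntervalIntegrable (fun x => w x * u' x) volume 0 a :=
      hu'.continuousOn_mul hwc.continuousOn
    set T := ∫ x in (0:ℝ)..a, w x * u' x with hT
    have hu'0 : ∫ x in (0:ℝ)..a, u' x = 0 := by
      rw [← hrep a ⟨ha.le, le_rfl⟩]; exact hua
    have hint_u : ∫ x in (0:ℝ)..a, u x = T := by
      have h1 : ∫ x in (0:ℝ)..a, u x = ∫ x in (0:ℝ)..a, (∫ t in (0:ℝ)..x, u' t) := by
        apply integral_congr
        intro x hx
        rw [Set.uIcc_of_le ha.le] at hx
        exact hrep x hx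
      rw [h1, swap_aux a ha u' hu']
      have h2 : ∫ t in (0:ℝ)..a, (a - t) * u' t
          = ∫ t in (0:ℝ)..a, ((a / 2) * u' t + w t * u' t) := by
        apply integral_congr
        intro x _
        simp only [hw]; ring
      rw [h2, integral_add (hu'.const_mul (a / 2)) hwu', intervalIntegral.integral_const_mul, hu'0]
      ring
    have hw2 : IntervalIntegrable (fun x => (w x) ^ 2) volume 0 a :=
      ((hwc.pow 2).intervalIntegrable 0 a)
    have hQ : ∫ x in (0:ℝ)..a, (w x) ^ 2 = a ^ 3 / 12 := wsq_integral a
    have hcs : T ^ 2 ≤ a ^ 3 / 12 * S := by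
      have hnn : 0 ≤ ∫ x in (0:ℝ)..a, (w x * S - u' x * T) ^ 2 :=
        intervalIntegral.integral_nonneg ha.le (fun x _ => sq_nonneg _)
      have hexp : (fun x => (w x * S - u' x * T) ^ 2)
          = fun x => (S ^ 2 * (w x) ^ 2 - (2 * S * T) * (w x * u' x))
              + T ^ 2 * (u' x) ^ 2 := by
        funext x; ring
      rw [hexp, integral_add (((hw2.const_mul (S ^ 2))).sub (hwu'.const_mul (2 * S * T)))
        (hu'2.const_mul (T ^ 2)), integral_sub (hw2.const_mul (S ^ 2))
        (hwu'.const_mul (2 * S * T)), intervalIntegral.integral_const_mul, intervalIntegral.integral_const_mul,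
        intervalIntegral.integral_const_mul, hQ, ← hT, ← hS] at hnn
      nlinarith [hpos]
    rw [hint_u, div_le_iff₀ hpos]
    exact hcs
  · have hnum : ∫ x in (0:ℝ)..a, x * (a - x) / 2 = a ^ 3 / 12 := by
      have h1 : ∫ x in (0:ℝ)..a, x * (a - x) / 2
          = ∫ x in (0:ℝ)..a, ((a / 2) * x - (1 / 2) * x ^ 2) := by
        apply integral_congr
        intro x _; ring
      rw [h1, integral_sub ((intervalIntegrable_id).const_mul _)
        ((intervalIntegrable_pow 2).const_mul _), intervalIntegral.integral_const_mul, intervalIntegral.integral_const_mul,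
        integral_id, integral_pow]
      ring
    rw [hnum, wsq_integral a]
    have hne : a ^ 3 / 12 ≠ 0 := by positivity
    rw [sq, mul_div_assoc, div_self hne, mul_one]
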